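/- For any integer n ≥ 2, the sum over k from 0 to n-1 of ((-n)_k (n-1)_k (-1/2)_k) / ((1)_k^2 (1/2)_k) equals (1/(2n-1)) (4n(n-1) + (-1)^n binomial(2n-2, n)). -/

import Mathlib

open Finset

/-- The Pochhammer symbol (rising factorial): (a)_0 = 1, (a)_k = a(a+1)⋯(a+k-1). -/
def poch (a : ℚ) : ℕ → ℚ
  | 0 => 1
  | k + 1 => poch a k * (a + k)


open Nat

lemma poch_succ (a : ℚ) (k : ℕ) : poch a (k+1) = poch a k * (a + k) := rfl

lemma poch_pos {a : ℚ} (ha : 0 < a) : ∀ k, 0 < poch a k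
  | 0 => one_pos
  | k + 1 => mul_pos (poch_pos ha k) (by positivity)

lemma poch_shift (a : ℚ) : ∀ k : ℕ, a * poch (a+1) k = (a + k) * poch a k
  | 0 => by simp [poch]
  | k + 1 => by
      rw [poch_succ, poch_succ, ← mul_assoc, poch_shift a k]
      push_cast
      ring

lemma poch_left (a : ℚ) : ∀ k : ℕ, poch a (k+1) = a * poch (a+1) k
  | 0 => by simp [poch]
  | k + 1 => by
      rw [poch_succ, poch_left a k, poch_succ]
      push_cast
      ring

lemma poch_neg_nat : ∀ n : ℕ, poch (-(n:ℚ)) n = (-1)^n * ((n ! : ℕ) : ℚ)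
  | 0 => by simp [poch]
  | n + 1 => by
      have h : (-(((n+1 : ℕ)):ℚ)) + 1 = -(n:ℚ) := by push_cast; ring
      rw [poch_left, h, poch_neg_nat n]
      push_cast [Nat.factorial_succ]
      ring

lemma poch_nat_fact (m : ℕ) : ∀ k : ℕ, poch ((m:ℚ)+1) k * ((m ! : ℕ) : ℚ) = (((m+k)! : ℕ) : ℚ)
  | 0 => by simp [poch]
  | k + 1 => by
      rw [poch_succ, mul_right_comm, poch_nat_fact m k]
      have h : m + (k+1) = (m+k) + 1 := by omega
      rw [h]
      push_cast [Nat.factorial_succ]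
      ring

lemma poch_one (k : ℕ) : poch 1 k = ((k ! : ℕ) : ℚ) := by
  have := poch_nat_fact 0 k
  simpa using this

lemma poch_half (k : ℕ) : (2*(k:ℚ)-1) * poch (-(1/2)) k = - poch (1/2) k := by
  induction k with
  | zero => simp [poch]
  | succ k ih =>
      rw [poch_succ, poch_succ]
      push_cast
      linear_combination ((k:ℚ) + 1/2) * ih

lemma poch_neg_succ (n : ℕ) : poch (-(n:ℚ)) (n+1) = 0 := by
  rw [poch_succ]; simp

def T (n k : ℕ) : ℚ :=
  poch (-(n : ℚ)) k * poch ((n : ℚ) - 1) k * poch (-(1/2)) k /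
    (poch 1 k ^ 2 * poch (1/2) k)

def Nc (n k : ℚ) : ℚ :=
  -2*(n^4+n^2+2)*k^2 + 4*(2*n^4+3*n^2+6)*k^3 - 4*(2*n^4+6*n^2+13)*k^4
    + 16*(n^2+3)*k^5 - 16*k^6

def G (n : ℕ) : ℕ → ℚ
  | 0 => 0
  | j + 1 =>
      -Nc n (j+1) * poch (-(n:ℚ)) j * poch ((n:ℚ)-1) (j+1) * poch (-(1/2)) (j+1) /
        ((n:ℚ) * ((n:ℚ)-1)^2 * ((n:ℚ)+1) * (2*(j:ℚ)+1) * poch 1 (j+1) ^ 2 * poch (1/2) (j+1))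

set_option maxHeartbeats 4000000 in
lemma cert_succ (n j : ℕ) (hn : 2 ≤ n) (hj : j ≤ n) :
    ((n:ℚ)-1)*(2*n+1) * T (n+1) (j+1) - ((n:ℚ)+1)*(2*n-1) * T n (j+1)
      = G n (j+2) - G n (j+1) := by
  have hD : poch 1 j ≠ 0 := ne_of_gt (poch_pos one_pos j)
  have hE : (0:ℚ) < poch (1/2) j := poch_pos (by norm_num) j
  have hn1 : ((n:ℚ)) - 1 ≠ 0 := by
    have : (2:ℚ) ≤ (n:ℚ) := by exact_mod_cast hn
    intro h; nlinarith
  have hn0 : ((n:ℚ)) ≠ 0 := by positivity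
  have hnp : ((n:ℚ)) + 1 ≠ 0 := by positivity
  have hnj : ((n:ℚ)) + 1 - j ≠ 0 := by
    have : (j:ℚ) ≤ (n:ℚ) := by exact_mod_cast hj
    intro h; nlinarith
  -- express poch (-(n+1)) j in terms of A := poch (-n) j
  have hshift1 : poch (-((n:ℚ)+1)) j = ((n:ℚ)+1) * poch (-(n:ℚ)) j / ((n:ℚ)+1-j) := by
    have h := poch_shift (-((n:ℚ)+1)) j
    have h2 : (-((n:ℚ)+1)) + 1 = -(n:ℚ) := by ring
    rw [h2] at h
    rw [eq_div_iff hnj]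
    linear_combination h
  have hshift2 : poch ((n:ℚ)) j = ((n:ℚ)-1+j) * poch ((n:ℚ)-1) j / ((n:ℚ)-1) := by
    have h := poch_shift ((n:ℚ)-1) j
    have h2 : ((n:ℚ)-1) + 1 = (n:ℚ) := by ring
    rw [h2] at h
    rw [eq_div_iff hn1]
    linear_combination h
  show ((n:ℚ)-1)*(2*n+1) *
      (poch (-((n+1:ℕ) : ℚ)) (j+1) * poch (((n+1:ℕ) : ℚ) - 1) (j+1) * poch (-(1/2)) (j+1) /
        (poch 1 (j+1) ^ 2 * poch (1/2) (j+1)))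
    - ((n:ℚ)+1)*(2*n-1) *
      (poch (-(n : ℚ)) (j+1) * poch ((n : ℚ) - 1) (j+1) * poch (-(1/2)) (j+1) /
        (poch 1 (j+1) ^ 2 * poch (1/2) (j+1)))
    = (-Nc n ((j+1:ℕ)+1) * poch (-(n:ℚ)) (j+1) * poch ((n:ℚ)-1) ((j+1)+1) * poch (-(1/2)) ((j+1)+1) /
        ((n:ℚ) * ((n:ℚ)-1)^2 * ((n:ℚ)+1) * (2*((j+1:ℕ):ℚ)+1) * poch 1 ((j+1)+1) ^ 2 * poch (1/2) ((j+1)+1)))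
      - (-Nc n (j+1) * poch (-(n:ℚ)) j * poch ((n:ℚ)-1) (j+1) * poch (-(1/2)) (j+1) /
        ((n:ℚ) * ((n:ℚ)-1)^2 * ((n:ℚ)+1) * (2*(j:ℚ)+1) * poch 1 (j+1) ^ 2 * poch (1/2) (j+1)))
  have hcast : ((n+1:ℕ):ℚ) = (n:ℚ)+1 := by push_cast; ring
  rw [hcast]
  rw [show ((n:ℚ)+1-1 : ℚ) = (n:ℚ) from by ring]
  rw [poch_succ ((n:ℚ)-1) (j+1), poch_succ (-(1/2)) (j+1),
      poch_succ 1 (j+1), poch_succ (1/2) (j+1)]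
  rw [poch_succ (-((n:ℚ)+1)) j, poch_succ ((n:ℚ)) j, poch_succ (-(n:ℚ)) j,
      poch_succ ((n:ℚ)-1) j, poch_succ (-(1/2)) j, poch_succ 1 j, poch_succ (1/2) j]
  rw [hshift1, hshift2]
  push_cast
  unfold Nc
  have h1 : (1:ℚ) + j ≠ 0 := by positivity
  have h2 : (1:ℚ)/2 + j ≠ 0 := by positivity
  have h3 : (2:ℚ)*j+1 ≠ 0 := by positivity
  have h4 : (2:ℚ)*((j:ℚ)+1)+1 ≠ 0 := by positivity
  have h5 : (1:ℚ) + ((j:ℚ)+1) ≠ 0 := by positivity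
  have h6 : (1:ℚ)/2 + ((j:ℚ)+1) ≠ 0 := by positivity
  have hE' : poch (1/2) j ≠ 0 := ne_of_gt hE
  field_simp
  ring

lemma cert_zero (n : ℕ) (hn : 2 ≤ n) :
    ((n:ℚ)-1)*(2*n+1) * T (n+1) 0 - ((n:ℚ)+1)*(2*n-1) * T n 0
      = G n 1 - G n 0 := by
  have hn1 : ((n:ℚ)) - 1 ≠ 0 := by
    have : (2:ℚ) ≤ (n:ℚ) := by exact_mod_cast hn
    intro h; nlinarith
  have hn0 : ((n:ℚ)) ≠ 0 := by positivity
  have hnp : ((n:ℚ)) + 1 ≠ 0 := by positivity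
  show ((n:ℚ)-1)*(2*n+1) * (1*1*1/(1^2*1)) - ((n:ℚ)+1)*(2*n-1) * (1*1*1/(1^2*1))
      = -Nc n (0+1) * 1 * poch ((n:ℚ)-1) 1 * poch (-(1/2)) 1 /
        ((n:ℚ) * ((n:ℚ)-1)^2 * ((n:ℚ)+1) * (2*((0:ℕ):ℚ)+1) * poch 1 1 ^ 2 * poch (1/2) 1) - 0
  simp only [poch, Nc]
  push_cast
  field_simp
  ring

lemma T_top (n : ℕ) : T n (n+1) = 0 := by
  unfold T
  rw [poch_neg_succ]
  simp

lemma G_top (n : ℕ) : G n (n+2) = 0 := by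
  show -Nc n (((n+1:ℕ):ℚ)+1) * poch (-(n:ℚ)) (n+1) * poch ((n:ℚ)-1) ((n+1)+1) * poch (-(1/2)) ((n+1)+1) /
        ((n:ℚ) * ((n:ℚ)-1)^2 * ((n:ℚ)+1) * (2*((n+1:ℕ):ℚ)+1) * poch 1 ((n+1)+1) ^ 2 * poch (1/2) ((n+1)+1)) = 0
  rw [poch_neg_succ]
  simp

lemma F_rec (n : ℕ) (hn : 2 ≤ n) :
    ((n:ℚ)-1)*(2*n+1) * (∑ k ∈ range (n+2), T (n+1) k)
      = ((n:ℚ)+1)*(2*n-1) * (∑ k ∈ range (n+1), T n k) := by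
  have h : ∑ k ∈ range (n+2),
      (((n:ℚ)-1)*(2*n+1) * T (n+1) k - ((n:ℚ)+1)*(2*n-1) * T n k)
      = ∑ k ∈ range (n+2), (G n (k+1) - G n k) := by
    refine Finset.sum_congr rfl fun k hk => ?_
    match k with
    | 0 => exact cert_zero n hn
    | j+1 =>
        have hj : j ≤ n := by
          have := Finset.mem_range.mp hk; omega
        exact cert_succ n j hn hj
  rw [Finset.sum_range_sub (G n)] at h
  rw [show G n 0 = 0 from rfl, G_top] at h
  have h2 : ∑ k ∈ range (n+2), T n k = ∑ k ∈ range (n+1), T n k := by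
    rw [Finset.sum_range_succ, T_top, add_zero]
  rw [Finset.sum_sub_distrib, ← Finset.mul_sum, ← Finset.mul_sum, h2] at h
  linarith [h]

lemma F_val : ∀ n : ℕ, 2 ≤ n → ∑ k ∈ range (n+1), T n k
    = 4*(n:ℚ)*((n:ℚ)-1)/(2*(n:ℚ)-1) := by
  intro n hn
  induction n, hn using Nat.le_induction with
  | base =>
      norm_num [Finset.sum_range_succ, T, poch]
  | succ n hn ih =>
      have hn1 : ((n:ℚ)) - 1 ≠ 0 := by
        have : (2:ℚ) ≤ (n:ℚ) := by exact_mod_cast hn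
        intro h; nlinarith
      have h2 : (2*(n:ℚ)+1) ≠ 0 := by positivity
      have h3 : (2*(n:ℚ)-1) ≠ 0 := by
        have : (2:ℚ) ≤ (n:ℚ) := by exact_mod_cast hn
        intro h; nlinarith
      have ih' : (2*(n:ℚ)-1) * (∑ k ∈ range (n+1), T n k) = 4*(n:ℚ)*((n:ℚ)-1) := by
        rw [ih]; field_simp
      have e := F_rec n hn
      have key : (∑ k ∈ range (n+2), T (n+1) k)
          = 4*((n:ℚ)+1)*(n:ℚ)/(2*(n:ℚ)+1) := by
        rw [eq_div_iff h2]
        apply mul_left_cancel₀ hn1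
        apply mul_left_cancel₀ h3
        linear_combination (2*(n:ℚ)-1)*e + ((n:ℚ)+1)*(2*(n:ℚ)-1)*ih'
      push_cast
      rw [show n+1+1 = n+2 from rfl, key]
      ring_nf

lemma T_nn (n : ℕ) (hn : 2 ≤ n) :
    T n n = (-1)^(n+1) * ((2*n-2).choose n : ℚ) / (2*(n:ℚ)-1) := by
  have hnq : (2:ℚ) ≤ (n:ℚ) := by exact_mod_cast hn
  have h3 : (2*(n:ℚ)-1) ≠ 0 := by intro h; nlinarith
  have hfn : ((n ! : ℕ) : ℚ) ≠ 0 := Nat.cast_ne_zero.mpr (Nat.factorial_ne_zero n)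
  have hfn2 : (((n-2)! : ℕ) : ℚ) ≠ 0 := Nat.cast_ne_zero.mpr (Nat.factorial_ne_zero _)
  have hE : poch (1/2) n ≠ 0 := ne_of_gt (poch_pos (by norm_num) n)
  have hB : poch ((n:ℚ)-1) n = (((2*n-2)! : ℕ) : ℚ) / (((n-2)! : ℕ) : ℚ) := by
    have h := poch_nat_fact (n-2) n
    have hc : ((n-2 : ℕ):ℚ) + 1 = (n:ℚ) - 1 := by
      rw [Nat.cast_sub hn]; push_cast; ring
    rw [hc, show (n-2)+n = 2*n-2 from by omega] at h
    rw [eq_div_iff hfn2]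
    exact h
  have hC : poch (-(1/2)) n = - poch (1/2) n / (2*(n:ℚ)-1) := by
    rw [eq_div_iff h3]
    linear_combination poch_half n
  have hch : (((2*n-2).choose n : ℕ) : ℚ) * ((n ! : ℕ) : ℚ) * (((n-2)! : ℕ) : ℚ)
      = (((2*n-2)! : ℕ) : ℚ) := by
    have := Nat.choose_mul_factorial_mul_factorial (show n ≤ 2*n-2 by omega)
    rw [show 2*n-2-n = n-2 from by omega] at this
    exact_mod_cast congrArg (Nat.cast : ℕ → ℚ) this
  unfold T
  rw [poch_neg_nat, poch_one, hB, hC]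
  rw [eq_div_iff h3]
  field_simp
  linear_combination ((-1)^n : ℚ) * hch

theorem stmt3 (n : ℕ) (hn : 2 ≤ n) :
    ∑ k ∈ Finset.range n,
      poch (-(n : ℚ)) k * poch ((n : ℚ) - 1) k * poch (-(1/2)) k /
        (poch 1 k ^ 2 * poch (1/2) k)
    = (1 / (2 * (n : ℚ) - 1)) *
        (4 * (n : ℚ) * ((n : ℚ) - 1) + (-1) ^ n * (Nat.choose (2 * n - 2) n : ℚ)) := by
  have hF := F_val n hn
  rw [Finset.sum_range_succ] at hF
  have hT := T_nn n hn
  show ∑ k ∈ Finset.range n, T n k = _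
  linear_combination hF - hT
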